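/- Let m, n ≥ 1, let G = G_{m×n} be the grid graph, and let d = gcd(m+1, n+1). For every integer k with 0 ≤ k ≤ d, the set S_k = {(i,j) ∈ {1,…,m}×{1,…,n} : d ∤ i, d ∤ j, and (i+j ≡ k (mod 2d) or i+j ≡ −k (mod 2d) or i−j ≡ k (mod 2d) or i−j ≡ −k (mod 2d))} is an independent set of G, and every vertex u of G with u ∉ S_k has an even number of neighbors in S_k. In particular, whenever S_k is nonempty, S_k is an even kernel of G. -/

import Mathlib

/-- P-positions of undirected edge geography on the edge set `F` with root `v`:
every move (removing an edge `s(v,w) ∈ F` and moving the root to `w`)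
leads to a position that is not a P-position. -/
def UegPPos {V : Type} [DecidableEq V] (F : Finset (Sym2 V)) (v : V) : Prop :=
  ∀ w : V, ∀ h : s(v, w) ∈ F, ¬ UegPPos (F.erase s(v, w)) w
termination_by F.card
decreasing_by exact Finset.card_erase_lt_of_mem h

/-- N-positions of undirected edge geography: some move leads to a P-position. -/
def UegNPos {V : Type} [DecidableEq V] (F : Finset (Sym2 V)) (v : V) : Prop :=
  ∃ w : V, ∃ _ : s(v, w) ∈ F, UegPPos (F.erase s(v, w)) w

/-- The grid graph `G_{m×n}`: the vertex `(i, j)` of the grid (with `1 ≤ i ≤ m`,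
`1 ≤ j ≤ n`) is encoded as the pair `(⟨i-1, _⟩, ⟨j-1, _⟩) : Fin m × Fin n`;
two vertices `(i,j)` and `(i',j')` are adjacent iff `|i-i'| + |j-j'| = 1`. -/
def gridGraph (m n : ℕ) : SimpleGraph (Fin m × Fin n) where
  Adj p q := ((p.1.val : ℤ) - q.1.val).natAbs + ((p.2.val : ℤ) - q.2.val).natAbs = 1
  symm := ⟨by intro p q h; omega⟩
  loopless := ⟨by intro p h; omega⟩

instance (m n : ℕ) : DecidableRel (gridGraph m n).Adj := fun p q =>
  inferInstanceAs
    (Decidable (((p.1.val : ℤ) - q.1.val).natAbs + ((p.2.val : ℤ) - q.2.val).natAbs = 1))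

/-- An even kernel of a simple graph: a nonempty independent set `S` such that every
vertex not in `S` has an even number of neighbors in `S`. -/
def IsEvenKernel {V : Type} (G : SimpleGraph V) (S : Set V) : Prop :=
  S.Nonempty ∧ (∀ u ∈ S, ∀ w ∈ S, ¬ G.Adj u w) ∧
    ∀ u, u ∉ S → Even {w | w ∈ S ∧ G.Adj u w}.ncard

/-- The set `S_k` of vertices `(i,j)` of the grid `G_{m×n}` with `d ∤ i`, `d ∤ j` and
`i + j ≡ ±k (mod 2d)` or `i - j ≡ ±k (mod 2d)` (here `i = p.1.val + 1`,
`j = p.2.val + 1`). -/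
def gridSk (m n d k : ℕ) : Set (Fin m × Fin n) :=
  {p | ¬ d ∣ (p.1.val + 1) ∧ ¬ d ∣ (p.2.val + 1) ∧
    (((p.1.val + 1 : ℤ) + (p.2.val + 1)) ≡ (k : ℤ) [ZMOD (2 * d)] ∨
     ((p.1.val + 1 : ℤ) + (p.2.val + 1)) ≡ (-k : ℤ) [ZMOD (2 * d)] ∨
     ((p.1.val + 1 : ℤ) - (p.2.val + 1)) ≡ (k : ℤ) [ZMOD (2 * d)] ∨
     ((p.1.val + 1 : ℤ) - (p.2.val + 1)) ≡ (-k : ℤ) [ZMOD (2 * d)])}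



def Pint (d k x y : ℤ) : Prop :=
  ¬ d ∣ x ∧ ¬ d ∣ y ∧
    (2*d ∣ x + y - k ∨ 2*d ∣ x + y + k ∨ 2*d ∣ x - y - k ∨ 2*d ∣ x - y + k)

lemma dvd_congr' (a b c : ℤ) (h : a ∣ b - c) : a ∣ b ↔ a ∣ c :=
  ⟨fun h' => by simpa using dvd_sub h' h, fun h' => by simpa using dvd_add h h'⟩

lemma ivl2 (D x : ℤ) (hD : 0 < D) (h1 : 0 < x) (h2 : x ≤ 2*D) :
    D ∣ x ↔ (x = D ∨ x = 2*D) := by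
  constructor
  · rintro ⟨c, rfl⟩
    have hc1 : 0 < c := by nlinarith
    have hc2 : c < 3 := by nlinarith
    interval_cases c
    · left; ring
    · right; ring
  · rintro (rfl | rfl)
    · exact ⟨1, by ring⟩
    · exact ⟨2, by ring⟩

lemma ivl2' (D x : ℤ) (hD : 0 < D) (h1 : -D < x) (h2 : x < 2*D) :
    D ∣ x ↔ (x = 0 ∨ x = D) := by
  constructor
  · rintro ⟨c, rfl⟩
    have hc1 : -1 < c := by nlinarith
    have hc2 : c < 2 := by nlinarith
    interval_cases c
    · left; ring
    · right; ring
  · rintro (rfl | rfl)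
    · exact ⟨0, by ring⟩
    · exact ⟨1, by ring⟩

lemma ivlB (D x : ℤ) (hD : 0 < D) (h1 : 0 < x) (h2 : x < 3*D) :
    D ∣ x ↔ (x = D ∨ x = 2*D) := by
  constructor
  · rintro ⟨c, rfl⟩
    have hc1 : 0 < c := by nlinarith
    have hc2 : c < 3 := by nlinarith
    interval_cases c
    · left; ring
    · right; ring
  · rintro (rfl | rfl)
    · exact ⟨1, by ring⟩
    · exact ⟨2, by ring⟩

lemma ivlE (D x : ℤ) (hD : 0 < D) (h1 : -D < x) (h2 : x < 3*D) :
    D ∣ x ↔ (x = 0 ∨ x = D ∨ x = 2*D) := by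
  constructor
  · rintro ⟨c, rfl⟩
    have hc1 : -1 < c := by nlinarith
    have hc2 : c < 3 := by nlinarith
    interval_cases c
    · left; ring
    · right; left; ring
    · right; right; ring
  · rintro (rfl | rfl | rfl)
    · exact ⟨0, by ring⟩
    · exact ⟨1, by ring⟩
    · exact ⟨2, by ring⟩

lemma ivlG (D x : ℤ) (hD : 0 < D) (h1 : -(2*D) < x) (h2 : x < 2*D) :
    D ∣ x ↔ (x = -D ∨ x = 0 ∨ x = D) := by
  constructor
  · rintro ⟨c, rfl⟩
    have hc1 : -2 < c := by nlinarith
    have hc2 : c < 2 := by nlinarith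
    interval_cases c
    · left; ring
    · right; left; ring
    · right; right; ring
  · rintro (rfl | rfl | rfl)
    · exact ⟨-1, by ring⟩
    · exact ⟨0, by ring⟩
    · exact ⟨1, by ring⟩

def G1 (d k σ τ : ℤ) : Prop :=
  ¬(σ+1 = d ∨ σ+1 = 2*d) ∧ ¬(τ = 0 ∨ τ = d) ∧
    ((σ+τ+1-k = 0 ∨ σ+τ+1-k = 2*d) ∨
     (σ+τ+1+k = 2*d ∨ σ+τ+1+k = 2*(2*d)) ∨
     (σ-τ+1-k = -(2*d) ∨ σ-τ+1-k = 0 ∨ σ-τ+1-k = 2*d) ∨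
     (σ-τ+1+k = 0 ∨ σ-τ+1+k = 2*d))

def G2 (d k σ τ : ℤ) : Prop :=
  ¬(σ-1 = 0 ∨ σ-1 = d) ∧ ¬(τ = 0 ∨ τ = d) ∧
    ((σ+τ-1-k = 0 ∨ σ+τ-1-k = 2*d) ∨
     (σ+τ-1+k = 0 ∨ σ+τ-1+k = 2*d ∨ σ+τ-1+k = 2*(2*d)) ∨
     (σ-τ-1-k = -(2*d) ∨ σ-τ-1-k = 0 ∨ σ-τ-1-k = 2*d) ∨
     (σ-τ-1+k = -(2*d) ∨ σ-τ-1+k = 0 ∨ σ-τ-1+k = 2*d))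

def G3 (d k σ τ : ℤ) : Prop :=
  ¬(σ = 0 ∨ σ = d) ∧ ¬(τ+1 = d ∨ τ+1 = 2*d) ∧
    ((σ+τ+1-k = 0 ∨ σ+τ+1-k = 2*d) ∨
     (σ+τ+1+k = 2*d ∨ σ+τ+1+k = 2*(2*d)) ∨
     (σ-τ-1-k = -(2*d) ∨ σ-τ-1-k = 0 ∨ σ-τ-1-k = 2*d) ∨
     (σ-τ-1+k = -(2*d) ∨ σ-τ-1+k = 0 ∨ σ-τ-1+k = 2*d))

def G4 (d k σ τ : ℤ) : Prop :=
  ¬(σ = 0 ∨ σ = d) ∧ ¬(τ-1 = 0 ∨ τ-1 = d) ∧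
    ((σ+τ-1-k = 0 ∨ σ+τ-1-k = 2*d) ∨
     (σ+τ-1+k = 0 ∨ σ+τ-1+k = 2*d ∨ σ+τ-1+k = 2*(2*d)) ∨
     (σ-τ+1-k = -(2*d) ∨ σ-τ+1-k = 0 ∨ σ-τ+1-k = 2*d) ∨
     (σ-τ+1+k = 0 ∨ σ-τ+1+k = 2*d))


set_option maxHeartbeats 4000000 in
lemma keyOdd0 (d k σ τ : ℤ) (hd : 2 ≤ d) (hk0 : 0 ≤ k) (hk : k ≤ d)
    (hσ1 : 0 ≤ σ) (hσ2 : σ < 2*d) (hτ1 : 0 ≤ τ) (hτ2 : τ < 2*d)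
    (c1 : G1 d k σ τ) (c2 : ¬ G2 d k σ τ) (c3 : ¬ G3 d k σ τ) (c4 : ¬ G4 d k σ τ) : False := by
  unfold G1 G2 G3 G4 at *
  omega


set_option maxHeartbeats 4000000 in
lemma keyOdd1 (d k σ τ : ℤ) (hd : 2 ≤ d) (hk0 : 0 ≤ k) (hk : k ≤ d)
    (hσ1 : 0 ≤ σ) (hσ2 : σ < 2*d) (hτ1 : 0 ≤ τ) (hτ2 : τ < 2*d)
    (c1 : ¬ G1 d k σ τ) (c2 : G2 d k σ τ) (c3 : ¬ G3 d k σ τ) (c4 : ¬ G4 d k σ τ) : False := by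
  unfold G1 G2 G3 G4 at *
  omega


set_option maxHeartbeats 4000000 in
lemma keyOdd2 (d k σ τ : ℤ) (hd : 2 ≤ d) (hk0 : 0 ≤ k) (hk : k ≤ d)
    (hσ1 : 0 ≤ σ) (hσ2 : σ < 2*d) (hτ1 : 0 ≤ τ) (hτ2 : τ < 2*d)
    (c1 : ¬ G1 d k σ τ) (c2 : ¬ G2 d k σ τ) (c3 : G3 d k σ τ) (c4 : ¬ G4 d k σ τ) : False := by
  unfold G1 G2 G3 G4 at *
  omega


set_option maxHeartbeats 4000000 in
lemma keyOdd3 (d k σ τ : ℤ) (hd : 2 ≤ d) (hk0 : 0 ≤ k) (hk : k ≤ d)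
    (hσ1 : 0 ≤ σ) (hσ2 : σ < 2*d) (hτ1 : 0 ≤ τ) (hτ2 : τ < 2*d)
    (c1 : G1 d k σ τ) (c2 : G2 d k σ τ) (c3 : G3 d k σ τ) (c4 : ¬ G4 d k σ τ) : False := by
  unfold G1 G2 G3 G4 at *
  omega


set_option maxHeartbeats 4000000 in
lemma keyOdd4 (d k σ τ : ℤ) (hd : 2 ≤ d) (hk0 : 0 ≤ k) (hk : k ≤ d)
    (hσ1 : 0 ≤ σ) (hσ2 : σ < 2*d) (hτ1 : 0 ≤ τ) (hτ2 : τ < 2*d)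
    (c1 : ¬ G1 d k σ τ) (c2 : ¬ G2 d k σ τ) (c3 : ¬ G3 d k σ τ) (c4 : G4 d k σ τ) : False := by
  unfold G1 G2 G3 G4 at *
  omega


set_option maxHeartbeats 4000000 in
lemma keyOdd5 (d k σ τ : ℤ) (hd : 2 ≤ d) (hk0 : 0 ≤ k) (hk : k ≤ d)
    (hσ1 : 0 ≤ σ) (hσ2 : σ < 2*d) (hτ1 : 0 ≤ τ) (hτ2 : τ < 2*d)
    (c1 : G1 d k σ τ) (c2 : G2 d k σ τ) (c3 : ¬ G3 d k σ τ) (c4 : G4 d k σ τ) : False := by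
  unfold G1 G2 G3 G4 at *
  omega


set_option maxHeartbeats 4000000 in
lemma keyOdd6 (d k σ τ : ℤ) (hd : 2 ≤ d) (hk0 : 0 ≤ k) (hk : k ≤ d)
    (hσ1 : 0 ≤ σ) (hσ2 : σ < 2*d) (hτ1 : 0 ≤ τ) (hτ2 : τ < 2*d)
    (c1 : G1 d k σ τ) (c2 : ¬ G2 d k σ τ) (c3 : G3 d k σ τ) (c4 : G4 d k σ τ) : False := by
  unfold G1 G2 G3 G4 at *
  omega


set_option maxHeartbeats 4000000 in
lemma keyOdd7 (d k σ τ : ℤ) (hd : 2 ≤ d) (hk0 : 0 ≤ k) (hk : k ≤ d)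
    (hσ1 : 0 ≤ σ) (hσ2 : σ < 2*d) (hτ1 : 0 ≤ τ) (hτ2 : τ < 2*d)
    (c1 : ¬ G1 d k σ τ) (c2 : G2 d k σ τ) (c3 : G3 d k σ τ) (c4 : G4 d k σ τ) : False := by
  unfold G1 G2 G3 G4 at *
  omega


set_option maxHeartbeats 1000000 in
lemma keyOddAll (d k σ τ : ℤ) (hd : 2 ≤ d) (hk0 : 0 ≤ k) (hk : k ≤ d)
    (hσ1 : 0 ≤ σ) (hσ2 : σ < 2*d) (hτ1 : 0 ≤ τ) (hτ2 : τ < 2*d)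
    (h : ¬ ((G1 d k σ τ ↔ G2 d k σ τ) ↔ (G3 d k σ τ ↔ G4 d k σ τ))) : False := by
  by_cases c1 : G1 d k σ τ <;> by_cases c2 : G2 d k σ τ <;>
    by_cases c3 : G3 d k σ τ <;> by_cases c4 : G4 d k σ τ <;>
    first
      | exact keyOdd0 d k σ τ hd hk0 hk hσ1 hσ2 hτ1 hτ2 c1 c2 c3 c4
      | exact keyOdd1 d k σ τ hd hk0 hk hσ1 hσ2 hτ1 hτ2 c1 c2 c3 c4
      | exact keyOdd2 d k σ τ hd hk0 hk hσ1 hσ2 hτ1 hτ2 c1 c2 c3 c4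
      | exact keyOdd3 d k σ τ hd hk0 hk hσ1 hσ2 hτ1 hτ2 c1 c2 c3 c4
      | exact keyOdd4 d k σ τ hd hk0 hk hσ1 hσ2 hτ1 hτ2 c1 c2 c3 c4
      | exact keyOdd5 d k σ τ hd hk0 hk hσ1 hσ2 hτ1 hτ2 c1 c2 c3 c4
      | exact keyOdd6 d k σ τ hd hk0 hk hσ1 hσ2 hτ1 hτ2 c1 c2 c3 c4
      | exact keyOdd7 d k σ τ hd hk0 hk hσ1 hσ2 hτ1 hτ2 c1 c2 c3 c4
      | exact h (by tauto)

set_option maxHeartbeats 1000000 in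
lemma key (d k i j : ℤ) (hd : 2 ≤ d) (hk0 : 0 ≤ k) (hk : k ≤ d) :
    ((Pint d k (i+1) j ↔ Pint d k (i-1) j) ↔ (Pint d k i (j+1) ↔ Pint d k i (j-1))) := by
  have hD : (0:ℤ) < 2*d := by linarith
  have hd0 : (0:ℤ) < d := by linarith
  obtain ⟨qi, σ, hiq, hσ1, hσ2⟩ : ∃ q r, i = 2*d*q + r ∧ 0 ≤ r ∧ r < 2*d :=
    ⟨i / (2*d), i % (2*d), (Int.mul_ediv_add_emod i (2*d)).symm,
      Int.emod_nonneg _ (by omega), Int.emod_lt_of_pos _ hD⟩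
  obtain ⟨qj, τ, hjq, hτ1, hτ2⟩ : ∃ q r, j = 2*d*q + r ∧ 0 ≤ r ∧ r < 2*d :=
    ⟨j / (2*d), j % (2*d), (Int.mul_ediv_add_emod j (2*d)).symm,
      Int.emod_nonneg _ (by omega), Int.emod_lt_of_pos _ hD⟩
  have g1 : Pint d k (i+1) j ↔ G1 d k σ τ := by
    have e1 := dvd_congr' d (i+1) (σ+1) ⟨2*qi, by linear_combination hiq⟩
    have e2 := dvd_congr' d j τ ⟨2*qj, by linear_combination hjq⟩
    have e3 := dvd_congr' (2*d) (i+1+j-k) (σ+τ+1-k) ⟨qi+qj, by linear_combination hiq + hjq⟩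
    have e4 := dvd_congr' (2*d) (i+1+j+k) (σ+τ+1+k) ⟨qi+qj, by linear_combination hiq + hjq⟩
    have e5 := dvd_congr' (2*d) (i+1-j-k) (σ-τ+1-k) ⟨qi-qj, by linear_combination hiq - hjq⟩
    have e6 := dvd_congr' (2*d) (i+1-j+k) (σ-τ+1+k) ⟨qi-qj, by linear_combination hiq - hjq⟩
    have f1 := ivl2 d (σ+1) hd0 (by omega) (by omega)
    have f2 := ivl2' d τ hd0 (by omega) (by omega)
    have f3 := ivl2' (2*d) (σ+τ+1-k) hD (by omega) (by omega)
    have f4 := ivlB (2*d) (σ+τ+1+k) hD (by omega) (by omega)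
    have f5 := ivlG (2*d) (σ-τ+1-k) hD (by omega) (by omega)
    have f6 := ivl2' (2*d) (σ-τ+1+k) hD (by omega) (by omega)
    unfold Pint G1
    simp only [e1, e2, e3, e4, e5, e6, f1, f2, f3, f4, f5, f6]
  have g2 : Pint d k (i-1) j ↔ G2 d k σ τ := by
    have e1 := dvd_congr' d (i-1) (σ-1) ⟨2*qi, by linear_combination hiq⟩
    have e2 := dvd_congr' d j τ ⟨2*qj, by linear_combination hjq⟩
    have e3 := dvd_congr' (2*d) (i-1+j-k) (σ+τ-1-k) ⟨qi+qj, by linear_combination hiq + hjq⟩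
    have e4 := dvd_congr' (2*d) (i-1+j+k) (σ+τ-1+k) ⟨qi+qj, by linear_combination hiq + hjq⟩
    have e5 := dvd_congr' (2*d) (i-1-j-k) (σ-τ-1-k) ⟨qi-qj, by linear_combination hiq - hjq⟩
    have e6 := dvd_congr' (2*d) (i-1-j+k) (σ-τ-1+k) ⟨qi-qj, by linear_combination hiq - hjq⟩
    have f1 := ivl2' d (σ-1) hd0 (by omega) (by omega)
    have f2 := ivl2' d τ hd0 (by omega) (by omega)
    have f3 := ivl2' (2*d) (σ+τ-1-k) hD (by omega) (by omega)
    have f4 := ivlE (2*d) (σ+τ-1+k) hD (by omega) (by omega)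
    have f5 := ivlG (2*d) (σ-τ-1-k) hD (by omega) (by omega)
    have f6 := ivlG (2*d) (σ-τ-1+k) hD (by omega) (by omega)
    unfold Pint G2
    simp only [e1, e2, e3, e4, e5, e6, f1, f2, f3, f4, f5, f6]
  have g3 : Pint d k i (j+1) ↔ G3 d k σ τ := by
    have e1 := dvd_congr' d i σ ⟨2*qi, by linear_combination hiq⟩
    have e2 := dvd_congr' d (j+1) (τ+1) ⟨2*qj, by linear_combination hjq⟩
    have e3 := dvd_congr' (2*d) (i+(j+1)-k) (σ+τ+1-k) ⟨qi+qj, by linear_combination hiq + hjq⟩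
    have e4 := dvd_congr' (2*d) (i+(j+1)+k) (σ+τ+1+k) ⟨qi+qj, by linear_combination hiq + hjq⟩
    have e5 := dvd_congr' (2*d) (i-(j+1)-k) (σ-τ-1-k) ⟨qi-qj, by linear_combination hiq - hjq⟩
    have e6 := dvd_congr' (2*d) (i-(j+1)+k) (σ-τ-1+k) ⟨qi-qj, by linear_combination hiq - hjq⟩
    have f1 := ivl2' d σ hd0 (by omega) (by omega)
    have f2 := ivl2 d (τ+1) hd0 (by omega) (by omega)
    have f3 := ivl2' (2*d) (σ+τ+1-k) hD (by omega) (by omega)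
    have f4 := ivlB (2*d) (σ+τ+1+k) hD (by omega) (by omega)
    have f5 := ivlG (2*d) (σ-τ-1-k) hD (by omega) (by omega)
    have f6 := ivlG (2*d) (σ-τ-1+k) hD (by omega) (by omega)
    unfold Pint G3
    simp only [e1, e2, e3, e4, e5, e6, f1, f2, f3, f4, f5, f6]
  have g4 : Pint d k i (j-1) ↔ G4 d k σ τ := by
    have e1 := dvd_congr' d i σ ⟨2*qi, by linear_combination hiq⟩
    have e2 := dvd_congr' d (j-1) (τ-1) ⟨2*qj, by linear_combination hjq⟩
    have e3 := dvd_congr' (2*d) (i+(j-1)-k) (σ+τ-1-k) ⟨qi+qj, by linear_combination hiq + hjq⟩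
    have e4 := dvd_congr' (2*d) (i+(j-1)+k) (σ+τ-1+k) ⟨qi+qj, by linear_combination hiq + hjq⟩
    have e5 := dvd_congr' (2*d) (i-(j-1)-k) (σ-τ+1-k) ⟨qi-qj, by linear_combination hiq - hjq⟩
    have e6 := dvd_congr' (2*d) (i-(j-1)+k) (σ-τ+1+k) ⟨qi-qj, by linear_combination hiq - hjq⟩
    have f1 := ivl2' d σ hd0 (by omega) (by omega)
    have f2 := ivl2' d (τ-1) hd0 (by omega) (by omega)
    have f3 := ivl2' (2*d) (σ+τ-1-k) hD (by omega) (by omega)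
    have f4 := ivlE (2*d) (σ+τ-1+k) hD (by omega) (by omega)
    have f5 := ivlG (2*d) (σ-τ+1-k) hD (by omega) (by omega)
    have f6 := ivl2' (2*d) (σ-τ+1+k) hD (by omega) (by omega)
    unfold Pint G4
    simp only [e1, e2, e3, e4, e5, e6, f1, f2, f3, f4, f5, f6]
  by_contra hcon
  rw [g1, g2, g3, g4] at hcon
  exact keyOddAll d k σ τ hd hk0 hk hσ1 hσ2 hτ1 hτ2 hcon


set_option linter.unusedTactic false in
lemma mem_gridSk_iff (m n d k : ℕ) (p : Fin m × Fin n) :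
    p ∈ gridSk m n d k ↔ Pint (d:ℤ) (k:ℤ) ((p.1.val:ℤ)+1) ((p.2.val:ℤ)+1) := by
  unfold gridSk Pint
  rw [Set.mem_setOf_eq]
  constructor
  · rintro ⟨h1, h2, h3⟩
    refine ⟨fun hdvd => h1 (by exact_mod_cast hdvd), fun hdvd => h2 (by exact_mod_cast hdvd), ?_⟩
    rcases h3 with h | h | h | h
    · obtain ⟨c, hc⟩ := Int.ModEq.dvd h
      exact Or.inl ⟨-c, by push_cast at hc ⊢; linear_combination -hc⟩
    · obtain ⟨c, hc⟩ := Int.ModEq.dvd h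
      exact Or.inr (Or.inl ⟨-c, by push_cast at hc ⊢; linear_combination -hc⟩)
    · obtain ⟨c, hc⟩ := Int.ModEq.dvd h
      exact Or.inr (Or.inr (Or.inl ⟨-c, by push_cast at hc ⊢; linear_combination -hc⟩))
    · obtain ⟨c, hc⟩ := Int.ModEq.dvd h
      exact Or.inr (Or.inr (Or.inr ⟨-c, by push_cast at hc ⊢; linear_combination -hc⟩))
  · rintro ⟨h1, h2, h3⟩
    refine ⟨fun hdvd => h1 (by exact_mod_cast hdvd), fun hdvd => h2 (by exact_mod_cast hdvd), ?_⟩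
    rcases h3 with h | h | h | h
    · obtain ⟨c, hc⟩ := h
      exact Or.inl (Int.modEq_iff_dvd.mpr ⟨-c, by push_cast at hc ⊢; linear_combination -hc⟩)
    · obtain ⟨c, hc⟩ := h
      exact Or.inr (Or.inl (Int.modEq_iff_dvd.mpr ⟨-c, by push_cast at hc ⊢; linear_combination -hc⟩))
    · obtain ⟨c, hc⟩ := h
      exact Or.inr (Or.inr (Or.inl (Int.modEq_iff_dvd.mpr ⟨-c, by push_cast at hc ⊢; linear_combination -hc⟩)))
    · obtain ⟨c, hc⟩ := h
      exact Or.inr (Or.inr (Or.inr (Int.modEq_iff_dvd.mpr ⟨-c, by push_cast at hc ⊢; linear_combination -hc⟩)))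

lemma indep_int (d k i j i' j' : ℤ) (h1 : Pint d k i j) (h2 : Pint d k i' j')
    (hadj : (i - i').natAbs + (j - j').natAbs = 1) : False := by
  obtain ⟨-, -, h1⟩ := h1
  obtain ⟨-, -, h2⟩ := h2
  have e1 : (2:ℤ) ∣ i + j - k ∨ (2:ℤ) ∣ i + j + k ∨ (2:ℤ) ∣ i - j - k ∨ (2:ℤ) ∣ i - j + k := by
    rcases h1 with h | h | h | h
    exacts [Or.inl (dvd_trans ⟨d, rfl⟩ h), Or.inr (Or.inl (dvd_trans ⟨d, rfl⟩ h)),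
      Or.inr (Or.inr (Or.inl (dvd_trans ⟨d, rfl⟩ h))), Or.inr (Or.inr (Or.inr (dvd_trans ⟨d, rfl⟩ h)))]
  have e2 : (2:ℤ) ∣ i' + j' - k ∨ (2:ℤ) ∣ i' + j' + k ∨ (2:ℤ) ∣ i' - j' - k ∨ (2:ℤ) ∣ i' - j' + k := by
    rcases h2 with h | h | h | h
    exacts [Or.inl (dvd_trans ⟨d, rfl⟩ h), Or.inr (Or.inl (dvd_trans ⟨d, rfl⟩ h)),
      Or.inr (Or.inr (Or.inl (dvd_trans ⟨d, rfl⟩ h))), Or.inr (Or.inr (Or.inr (dvd_trans ⟨d, rfl⟩ h)))]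
  omega

lemma even_helper (p1 p2 p3 p4 : Prop) [Decidable p1] [Decidable p2] [Decidable p3] [Decidable p4]
    (h : (p1 ↔ p2) ↔ (p3 ↔ p4)) :
    Even ((if p1 then 1 else 0) + ((if p2 then 1 else 0) +
      ((if p3 then 1 else 0) + (if p4 then (1:ℕ) else 0)))) := by
  split_ifs <;> first | decide | (exfalso; tauto)



/-- For `m, n ≥ 1`, `d = gcd(m+1, n+1)` and `0 ≤ k ≤ d`, the set `S_k`
is an independent set of `G_{m×n}`, every vertex not in `S_k` has an even number of
neighbors in `S_k`, and in particular `S_k` is an even kernel whenever it is nonempty. -/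
theorem grid_Sk_evenKernel (m n : ℕ) (hm : 1 ≤ m) (hn : 1 ≤ n)
    (d : ℕ) (hd : d = Nat.gcd (m + 1) (n + 1)) (k : ℕ) (hk : k ≤ d) :
    (∀ u ∈ gridSk m n d k, ∀ w ∈ gridSk m n d k, ¬ (gridGraph m n).Adj u w) ∧
    (∀ u, u ∉ gridSk m n d k →
      Even {w | w ∈ gridSk m n d k ∧ (gridGraph m n).Adj u w}.ncard) ∧
    ((gridSk m n d k).Nonempty → IsEvenKernel (gridGraph m n) (gridSk m n d k)) := by

  classical
  have hd0 : 0 < d := hd ▸ Nat.gcd_pos_of_pos_left _ (by omega)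
  have hdm : d ∣ m + 1 := hd ▸ Nat.gcd_dvd_left _ _
  have hdn : d ∣ n + 1 := hd ▸ Nat.gcd_dvd_right _ _
  have hind : ∀ u ∈ gridSk m n d k, ∀ w ∈ gridSk m n d k, ¬ (gridGraph m n).Adj u w := by
    intro u hu w hw hadj
    have hA : ((u.1.val:ℤ) - w.1.val).natAbs + ((u.2.val:ℤ) - w.2.val).natAbs = 1 := hadj
    exact indep_int d k _ _ _ _ ((mem_gridSk_iff m n d k u).mp hu)
      ((mem_gridSk_iff m n d k w).mp hw) (by omega)
  have heven : ∀ u : Fin m × Fin n,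
      Even {w | w ∈ gridSk m n d k ∧ (gridGraph m n).Adj u w}.ncard := by
    intro u
    rcases Nat.lt_or_ge d 2 with hd2 | hd2
    · have hd1 : d = 1 := by omega
      have hempty : {w | w ∈ gridSk m n d k ∧ (gridGraph m n).Adj u w} = ∅ := by
        ext w
        simp [gridSk, hd1]
      rw [hempty]
      simp
    · set i : ℤ := (u.1.val:ℤ) + 1 with hi
      set j : ℤ := (u.2.val:ℤ) + 1 with hj
      set ι : Fin m × Fin n → ℤ × ℤ := fun p => ((p.1.val:ℤ)+1, (p.2.val:ℤ)+1) with hι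
      have hinj : Function.Injective ι := by
        intro p q hpq
        have h1 := congrArg Prod.fst hpq
        have h2 := congrArg Prod.snd hpq
        simp only [hι] at h1 h2
        rw [Prod.ext_iff, Fin.ext_iff, Fin.ext_iff]
        omega
      set W : Set (Fin m × Fin n) := {w | w ∈ gridSk m n d k ∧ (gridGraph m n).Adj u w} with hW
      set F : Finset (ℤ × ℤ) := {(i+1,j), (i-1,j), (i,j+1), (i,j-1)} with hF
      have himg : ι '' W = ↑(F.filter (fun p => Pint d k p.1 p.2)) := by
        ext q
        simp only [Set.mem_image, hW, Set.mem_setOf_eq, Finset.coe_filter, hF,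
          Finset.mem_insert, Finset.mem_singleton]
        constructor
        · rintro ⟨w, ⟨hwS, hwA⟩, rfl⟩
          have hA : ((u.1.val:ℤ) - w.1.val).natAbs + ((u.2.val:ℤ) - w.2.val).natAbs = 1 := hwA
          have hwP := (mem_gridSk_iff m n d k w).mp hwS
          refine ⟨?_, hwP⟩
          simp only [hι, Prod.mk.injEq]
          omega
        · rintro ⟨hq, hqP⟩
          have hu1 := u.1.isLt
          have hu2 := u.2.isLt
          have hdm' : (d:ℤ) ∣ (m:ℤ) + 1 := by exact_mod_cast hdm
          have hdn' : (d:ℤ) ∣ (n:ℤ) + 1 := by exact_mod_cast hdn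
          rcases hq with rfl | rfl | rfl | rfl
          · have hlt : u.1.val + 1 < m := by
              by_contra hcon
              exact hqP.1 (by rw [show i + 1 = (m:ℤ) + 1 by omega]; exact hdm')
            refine ⟨(⟨u.1.val + 1, hlt⟩, u.2), ⟨?_, ?_⟩, ?_⟩
            · refine (mem_gridSk_iff m n d k _).mpr ?_
              have : ((((⟨u.1.val + 1, hlt⟩ : Fin m), u.2).1.val : ℤ) + 1) = i + 1 := by
                push_cast; omega
              rw [this]
              exact hqP
            · show ((u.1.val:ℤ) - ((u.1.val + 1 : ℕ):ℤ)).natAbs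
                + ((u.2.val:ℤ) - (u.2.val:ℤ)).natAbs = 1
              omega
            · simp only [hι, Prod.mk.injEq]
              constructor <;> push_cast <;> omega
          · have hpos : 1 ≤ u.1.val := by
              by_contra hcon
              exact hqP.1 (by rw [show i - 1 = 0 by omega]; exact dvd_zero _)
            refine ⟨(⟨u.1.val - 1, by omega⟩, u.2), ⟨?_, ?_⟩, ?_⟩
            · refine (mem_gridSk_iff m n d k _).mpr ?_
              have : ((((⟨u.1.val - 1, by omega⟩ : Fin m), u.2).1.val : ℤ) + 1) = i - 1 := by
                push_cast; omega
              rw [this]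
              exact hqP
            · show ((u.1.val:ℤ) - ((u.1.val - 1 : ℕ):ℤ)).natAbs
                + ((u.2.val:ℤ) - (u.2.val:ℤ)).natAbs = 1
              omega
            · simp only [hι, Prod.mk.injEq]
              constructor <;> push_cast <;> omega
          · have hlt : u.2.val + 1 < n := by
              by_contra hcon
              exact hqP.2.1 (by rw [show j + 1 = (n:ℤ) + 1 by omega]; exact hdn')
            refine ⟨(u.1, ⟨u.2.val + 1, hlt⟩), ⟨?_, ?_⟩, ?_⟩
            · refine (mem_gridSk_iff m n d k _).mpr ?_
              have : (((u.1, (⟨u.2.val + 1, hlt⟩ : Fin n)).2.val : ℤ) + 1) = j + 1 := by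
                push_cast; omega
              rw [this]
              exact hqP
            · show ((u.1.val:ℤ) - (u.1.val:ℤ)).natAbs
                + ((u.2.val:ℤ) - ((u.2.val + 1 : ℕ):ℤ)).natAbs = 1
              omega
            · simp only [hι, Prod.mk.injEq]
              constructor <;> push_cast <;> omega
          · have hpos : 1 ≤ u.2.val := by
              by_contra hcon
              exact hqP.2.1 (by rw [show j - 1 = 0 by omega]; exact dvd_zero _)
            refine ⟨(u.1, ⟨u.2.val - 1, by omega⟩), ⟨?_, ?_⟩, ?_⟩
            · refine (mem_gridSk_iff m n d k _).mpr ?_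
              have : (((u.1, (⟨u.2.val - 1, by omega⟩ : Fin n)).2.val : ℤ) + 1) = j - 1 := by
                push_cast; omega
              rw [this]
              exact hqP
            · show ((u.1.val:ℤ) - (u.1.val:ℤ)).natAbs
                + ((u.2.val:ℤ) - ((u.2.val - 1 : ℕ):ℤ)).natAbs = 1
              omega
            · simp only [hι, Prod.mk.injEq]
              constructor <;> push_cast <;> omega
      have hcount : W.ncard = (F.filter (fun p => Pint d k p.1 p.2)).card := by
        rw [← Set.ncard_coe_finset, ← himg, Set.ncard_image_of_injective _ hinj]
      have hne1 : ((i+1,j) : ℤ×ℤ) ∉ ({(i-1,j), (i,j+1), (i,j-1)} : Finset (ℤ×ℤ)) := by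
        simp only [Finset.mem_insert, Finset.mem_singleton, Prod.mk.injEq]
        omega
      have hne2 : ((i-1,j) : ℤ×ℤ) ∉ ({(i,j+1), (i,j-1)} : Finset (ℤ×ℤ)) := by
        simp only [Finset.mem_insert, Finset.mem_singleton, Prod.mk.injEq]
        omega
      have hne3 : ((i,j+1) : ℤ×ℤ) ∉ ({(i,j-1)} : Finset (ℤ×ℤ)) := by
        simp only [Finset.mem_singleton, Prod.mk.injEq]
        omega
      have hcard : (F.filter (fun p => Pint d k p.1 p.2)).card =
          (if Pint d k (i+1) j then 1 else 0) + ((if Pint d k (i-1) j then 1 else 0) +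
          ((if Pint d k i (j+1) then 1 else 0) + (if Pint d k i (j-1) then 1 else 0))) := by
        rw [Finset.card_filter, hF, Finset.sum_insert hne1, Finset.sum_insert hne2,
          Finset.sum_insert hne3, Finset.sum_singleton]
      rw [hcount, hcard]
      exact even_helper _ _ _ _
        (key (d:ℤ) (k:ℤ) i j (by exact_mod_cast hd2) (by positivity) (by exact_mod_cast hk))
  exact ⟨hind, fun u _ => heven u, fun hne => ⟨hne, hind, fun u _ => heven u⟩⟩
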